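/- Let T be a tree and let uv be an edge of T. Let T_{uv} be the tree obtained from T by subdividing the edge uv once (deleting uv, adding a new vertex w and edges uw and wv). Then diss(T_{uv}) ∈ {diss(T), diss(T) + 1}. -/

import Mathlib

/-- `S` is a dissociation set of `G`: the subgraph induced by `S` has maximum degree ≤ 1. -/
def IsDissocSet {V : Type} (G : SimpleGraph V) (S : Set V) : Prop :=
  ∀ v ∈ S, ({u ∈ S | G.Adj v u}).ncard ≤ 1

/-- The dissociation number of `G`: the maximum cardinality of a dissociation set. -/
noncomputable def dissNum {V : Type} [Fintype V] (G : SimpleGraph V) : ℕ :=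
  sSup {k | ∃ S : Set V, IsDissocSet G S ∧ S.ncard = k}

/-- The `k`-subdivision `T_{uv}^{(k)}` of the edge `uv` of `T`: the edge `uv` is replaced
by a path `u, w₀, w₁, …, w_{k-1}, v` of length `k+1` through `k` new vertices
`w₀, …, w_{k-1}` (the elements of `Fin k`); all other edges of `T` are kept. -/
def subdivide {V : Type} (T : SimpleGraph V) (u v : V) (k : ℕ) :
    SimpleGraph (V ⊕ Fin k) :=
  SimpleGraph.fromRel (fun x y =>
    (∃ a b : V, T.Adj a b ∧ ¬((a = u ∧ b = v) ∨ (a = v ∧ b = u)) ∧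
      x = Sum.inl a ∧ y = Sum.inl b) ∨
    (∃ p : Fin k, x = Sum.inl u ∧ (p : ℕ) = 0 ∧ y = Sum.inr p) ∨
    (∃ p q : Fin k, x = Sum.inr p ∧ y = Sum.inr q ∧ (p : ℕ) + 1 = q) ∨
    (∃ p : Fin k, x = Sum.inr p ∧ (p : ℕ) = k - 1 ∧ y = Sum.inl v))

lemma adj_inl_inl {V : Type} (T : SimpleGraph V) (u v a b : V) :
    (subdivide T u v 1).Adj (Sum.inl a) (Sum.inl b) ↔
      T.Adj a b ∧ ¬((a = u ∧ b = v) ∨ (a = v ∧ b = u)) := by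
  simp only [subdivide, SimpleGraph.fromRel_adj, ne_eq, Sum.inl.injEq, Sum.inl_ne_inr,
    Sum.inr_ne_inl, and_false, false_and, exists_false, or_false, false_or]
  constructor
  · rintro ⟨hne, ⟨a', b', h1, h2, ha, hb⟩ | ⟨a', b', h1, h2, hb, ha⟩⟩
    · subst ha; subst hb; exact ⟨h1, h2⟩
    · subst ha; subst hb; exact ⟨h1.symm, by tauto⟩
  · rintro ⟨h1, h2⟩
    exact ⟨by simpa using h1.ne, Or.inl ⟨a, b, h1, h2, rfl, rfl⟩⟩

lemma adj_inr_inl {V : Type} (T : SimpleGraph V) (u v a : V) (p : Fin 1) :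
    (subdivide T u v 1).Adj (Sum.inr p) (Sum.inl a) ↔ a = u ∨ a = v := by
  simp only [subdivide, SimpleGraph.fromRel_adj]
  constructor
  · rintro ⟨hne, h | h⟩ <;> aesop
  · rintro (rfl | rfl)
    · exact ⟨by simp, Or.inr (Or.inr (Or.inl ⟨p, rfl, Fin.val_eq_zero p, rfl⟩))⟩
    · exact ⟨by simp, Or.inl (Or.inr <| Or.inr <| Or.inr ⟨p, rfl, by simp, rfl⟩)⟩

lemma adj_not_inr_inr {V : Type} (T : SimpleGraph V) (u v : V) (p q : Fin 1) :
    ¬ (subdivide T u v 1).Adj (Sum.inr p) (Sum.inr q) := by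
  simp only [subdivide, SimpleGraph.fromRel_adj]
  rintro ⟨hne, h | h⟩ <;> aesop

lemma dissoc_bddAbove {V : Type} [Fintype V] (G : SimpleGraph V) :
    BddAbove {k | ∃ S : Set V, IsDissocSet G S ∧ S.ncard = k} := by
  refine ⟨Fintype.card V, fun k hk => ?_⟩
  obtain ⟨S, -, rfl⟩ := hk
  calc S.ncard ≤ (Set.univ : Set V).ncard :=
        Set.ncard_le_ncard (Set.subset_univ S) (Set.toFinite _)
    _ = Fintype.card V := by simp [Set.ncard_univ, Nat.card_eq_fintype_card]

lemma le_dissNum {V : Type} [Fintype V] (G : SimpleGraph V) {S : Set V}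
    (h : IsDissocSet G S) : S.ncard ≤ dissNum G :=
  le_csSup (dissoc_bddAbove G) ⟨S, h, rfl⟩

lemma exists_dissoc_max {V : Type} [Fintype V] (G : SimpleGraph V) :
    ∃ S : Set V, IsDissocSet G S ∧ S.ncard = dissNum G := by
  have h0 : (0 : ℕ) ∈ {k | ∃ S : Set V, IsDissocSet G S ∧ S.ncard = k} :=
    ⟨∅, fun v hv => absurd hv (by simp), by simp⟩
  exact Nat.sSup_mem ⟨0, h0⟩ (dissoc_bddAbove G)

/-- If `uv` is an edge of a tree `T` and `T_{uv}` is obtained from `T` by subdividing the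
edge `uv` once, then `diss(T_{uv}) ∈ {diss(T), diss(T) + 1}`. -/
theorem dissNum_subdivide_one
    {V : Type} [Fintype V] (T : SimpleGraph V) (hT : T.IsTree)
    (u v : V) (huv : T.Adj u v) :
    dissNum (subdivide T u v 1) = dissNum T ∨
    dissNum (subdivide T u v 1) = dissNum T + 1 := by
  set G := subdivide T u v 1 with hGdef
  have h1 : dissNum T ≤ dissNum G := by
    obtain ⟨S, hS, hcard⟩ := exists_dissoc_max T
    have himg : IsDissocSet G (Sum.inl '' S) := by
      rintro x ⟨a, ha, rfl⟩
      have hsub : {y ∈ Sum.inl '' S | G.Adj (Sum.inl a) y} ⊆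
          Sum.inl '' {b ∈ S | T.Adj a b} := by
        rintro y ⟨⟨b, hb, rfl⟩, hadj⟩
        exact ⟨b, ⟨hb, ((adj_inl_inl T u v a b).mp hadj).1⟩, rfl⟩
      calc {y ∈ Sum.inl '' S | G.Adj (Sum.inl a) y}.ncard
          ≤ (Sum.inl '' {b ∈ S | T.Adj a b}).ncard :=
            Set.ncard_le_ncard hsub (Set.toFinite _)
        _ = {b ∈ S | T.Adj a b}.ncard :=
            Set.ncard_image_of_injective _ Sum.inl_injective
        _ ≤ 1 := hS a ha
    have := le_dissNum G himg
    rwa [Set.ncard_image_of_injective _ Sum.inl_injective, hcard] at this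
  have h2 : dissNum G ≤ dissNum T + 1 := by
    obtain ⟨S', hS', hcard⟩ := exists_dissoc_max G
    set S₀ : Set V := {a | Sum.inl a ∈ S'} with hS₀def
    have key : ∀ a ∈ S₀, ∀ (P : V → Prop), (∀ b ∈ S₀, P b → T.Adj a b →
        ¬((a = u ∧ b = v) ∨ (a = v ∧ b = u))) →
        {b ∈ {c ∈ S₀ | P c} | T.Adj a b}.ncard ≤ 1 := by
      intro a ha P hP
      have hsub : Sum.inl '' {b ∈ {c ∈ S₀ | P c} | T.Adj a b} ⊆
          {y ∈ S' | G.Adj (Sum.inl a) y} := by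
        rintro y ⟨b, ⟨⟨hb, hPb⟩, hadj⟩, rfl⟩
        exact ⟨hb, (adj_inl_inl T u v a b).mpr ⟨hadj, hP b hb hPb hadj⟩⟩
      calc {b ∈ {c ∈ S₀ | P c} | T.Adj a b}.ncard
          = (Sum.inl '' {b ∈ {c ∈ S₀ | P c} | T.Adj a b}).ncard :=
            (Set.ncard_image_of_injective _ Sum.inl_injective).symm
        _ ≤ {y ∈ S' | G.Adj (Sum.inl a) y}.ncard :=
            Set.ncard_le_ncard hsub (Set.toFinite _)
        _ ≤ 1 := hS' _ ha
    have hsub' : S' ⊆ Sum.inl '' S₀ ∪ {Sum.inr 0} := by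
      rintro (a | p) ha
      · exact Or.inl ⟨a, ha, rfl⟩
      · right; simp [Subsingleton.elim p 0]
    by_cases hcase : u ∈ S₀ ∧ v ∈ S₀
    · -- w ∉ S', take S₀ \ {u}
      have hw : Sum.inr 0 ∉ S' := by
        intro hw
        have h2le : ({Sum.inl u, Sum.inl v} : Set (V ⊕ Fin 1)) ⊆
            {y ∈ S' | G.Adj (Sum.inr 0) y} := by
          rintro y (rfl | rfl)
          · exact ⟨hcase.1, (adj_inr_inl T u v u 0).mpr (Or.inl rfl)⟩
          · exact ⟨hcase.2, (adj_inr_inl T u v v 0).mpr (Or.inr rfl)⟩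
        have := Set.ncard_le_ncard h2le (Set.toFinite _)
        rw [Set.ncard_pair (by simpa using huv.ne)] at this
        have := hS' _ hw
        omega
      have hSeq : S' = Sum.inl '' S₀ := by
        apply Set.Subset.antisymm
        · intro x hx
          rcases hsub' hx with h | h
          · exact h
          · exact absurd (h ▸ hx) hw
        · rintro x ⟨a, ha, rfl⟩; exact ha
      have hdiss : IsDissocSet T (S₀ \ {u}) := by
        intro a ha
        have := key a ha.1 (· ≠ u) (by
          rintro b hb hbne hadj (⟨rfl, rfl⟩ | ⟨rfl, rfl⟩)
          · exact ha.2 rfl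
          · exact hbne rfl)
        simpa [Set.diff_eq, Set.sep_and, Set.sep_setOf] using this
      have hle := le_dissNum T hdiss
      have hc1 : (S₀ \ {u}).ncard = S₀.ncard - 1 :=
        Set.ncard_diff_singleton_of_mem hcase.1
      have hc2 : S'.ncard = S₀.ncard := by
        rw [hSeq, Set.ncard_image_of_injective _ Sum.inl_injective]
      have hpos : 0 < S₀.ncard := (Set.ncard_pos (Set.toFinite _)).mpr ⟨u, hcase.1⟩
      omega
    · -- S₀ is a dissociation set
      have hdiss : IsDissocSet T S₀ := by
        intro a ha
        have := key a ha (fun _ => True) (by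
          rintro b hb - hadj (⟨rfl, rfl⟩ | ⟨rfl, rfl⟩)
          · exact hcase ⟨ha, hb⟩
          · exact hcase ⟨hb, ha⟩)
        simpa using this
      have hle := le_dissNum T hdiss
      have hc : S'.ncard ≤ S₀.ncard + 1 := by
        calc S'.ncard ≤ (Sum.inl '' S₀ ∪ {Sum.inr 0}).ncard :=
              Set.ncard_le_ncard hsub' (Set.toFinite _)
          _ ≤ (Sum.inl '' S₀).ncard + ({Sum.inr 0} : Set (V ⊕ Fin 1)).ncard :=
              Set.ncard_union_le _ _
          _ = S₀.ncard + 1 := by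
              rw [Set.ncard_image_of_injective _ Sum.inl_injective, Set.ncard_singleton]
      omega
  omega
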